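/- arXiv:1504.03408 — 2 statements merged into one kernel-verified Lean document; each statement's English description precedes it below -/
import Mathlib

section
/- Let n ≥ 1, let λ = (λ_1,…,λ_k) be a partition, and let μ be a partition of n. Then in ℂ[S_n], e_λ(J_1,…,J_n) · C_μ = Σ C_{μ^(1)} C_{μ^(2)} ⋯ C_{μ^(k)} C_μ, where the sum is over all ordered k-tuples (μ^(1),…,μ^(k)) of partitions of n with ℓ*(μ^(i)) = λ_i for every i = 1,…,k. -/
open Finset Equiv Equiv.Perm


theorem sum_piFinset_succ {k : ℕ} {δ : Type*} {M : Type*} [AddCommMonoid M]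
    (t : Fin (k+1) → Finset δ) (F : (Fin (k+1) → δ) → M) :
    ∑ g ∈ Fintype.piFinset t, F g
      = ∑ x ∈ t 0, ∑ g ∈ Fintype.piFinset (fun i => t i.succ), F (Fin.cons x g) := by
  rw [Finset.sum_sigma']
  apply Finset.sum_nbij' (i := fun g => (⟨g 0, fun i => g i.succ⟩ : Σ _x : δ, (Fin k → δ)))
    (j := fun p => Fin.cons p.1 p.2)
  · intro g hg
    simp only [Fintype.mem_piFinset] at hg
    simp [Finset.mem_sigma, Fintype.mem_piFinset, hg]
  · intro p hp
    simp only [Finset.mem_sigma, Fintype.mem_piFinset] at hp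
    simp only [Fintype.mem_piFinset]
    intro i
    cases i using Fin.cases <;> simp [hp.1, hp.2 _]
  · intro g _
    exact (Fin.cons_self_tail g)
  · intro p _; cases p; simp
  · intro g _
    show F g = F (Fin.cons (g 0) (Fin.tail g))
    rw [Fin.cons_self_tail g]

-- L0
theorem prod_ofFn_sum {k : ℕ} {δ : Type*} {R : Type*} [Semiring R]
    (t : Fin k → Finset δ) (f : Fin k → δ → R) :
    (List.ofFn fun i => ∑ a ∈ t i, f i a).prod
      = ∑ g ∈ Fintype.piFinset t, (List.ofFn fun i => f i (g i)).prod := by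
  induction k with
  | zero => simp
  | succ k ih =>
    rw [sum_piFinset_succ]
    simp only [List.ofFn_succ, List.prod_cons, Fin.cons_zero, Fin.cons_succ]
    rw [ih (fun i => t i.succ) (fun i a => f i.succ a), Finset.sum_mul]
    refine Finset.sum_congr rfl fun x _ => ?_
    rw [Finset.mul_sum]

variable {n : ℕ}

def Gfac (h : Fin n → Option (Fin n)) (i : Fin n) : Equiv.Perm (Fin n) :=
  (h i).elim 1 (fun a => Equiv.swap a i)

def toPerm (h : Fin n → Option (Fin n)) : Equiv.Perm (Fin n) :=
  (List.ofFn (Gfac h)).prod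

def pp (h : Fin n → Option (Fin n)) (m : ℕ) : Equiv.Perm (Fin n) :=
  (((List.finRange n).take m).map (Gfac h)).prod

theorem toPerm_eq_pp (h : Fin n → Option (Fin n)) : toPerm h = pp h n := by
  rw [toPerm, pp, List.ofFn_eq_map, List.take_of_length_le (by simp)]

theorem pp_succ (h : Fin n → Option (Fin n)) {m : ℕ} (hm : m < n) :
    pp h (m + 1) = pp h m * Gfac h ⟨m, hm⟩ := by
  rw [pp, pp, List.take_succ]
  have : (List.finRange n)[m]? = some ⟨m, hm⟩ := by
    rw [List.getElem?_eq_getElem (by simpa using hm)]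
    simp
  rw [this]
  simp

theorem pp_succ_ge (h : Fin n → Option (Fin n)) {m : ℕ} (hm : n ≤ m) :
    pp h (m + 1) = pp h m := by
  rw [pp, pp, List.take_of_length_le (by simpa using Nat.le_succ_of_le hm),
    List.take_of_length_le (by simpa using hm)]

theorem pp_congr {h₁ h₂ : Fin n → Option (Fin n)} {m : ℕ}
    (hh : ∀ i : Fin n, i.val < m → h₁ i = h₂ i) : pp h₁ m = pp h₂ m := by
  induction m with
  | zero => rfl
  | succ m ih =>
    rcases lt_or_ge m n with hm | hm
    · rw [pp_succ _ hm, pp_succ _ hm, ih (fun i hi => hh i (Nat.lt_succ_of_lt hi))]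
      congr 1
      rw [Gfac, Gfac, hh ⟨m, hm⟩ (Nat.lt_succ_self m)]
    · rw [pp_succ_ge _ hm, pp_succ_ge _ hm, ih (fun i hi => hh i (Nat.lt_succ_of_lt hi))]

theorem pp_stable {h : Fin n → Option (Fin n)} {m : ℕ}
    (hh : ∀ i : Fin n, m ≤ i.val → h i = none) {m' : ℕ} (hm : m ≤ m') :
    pp h m' = pp h m := by
  induction m', hm using Nat.le_induction with
  | base => rfl
  | succ m' hmm' ih =>
    rcases lt_or_ge m' n with hm' | hm'
    · rw [pp_succ _ hm', ih]
      have : h ⟨m', hm'⟩ = none := hh _ hmm'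
      rw [Gfac, this]
      simp
    · rw [pp_succ_ge _ hm', ih]

theorem toPerm_eq_pp_of_none {h : Fin n → Option (Fin n)} {m : ℕ}
    (hh : ∀ i : Fin n, m ≤ i.val → h i = none) : toPerm h = pp h m := by
  rcases le_or_gt m n with hmn | hmn
  · rw [toPerm_eq_pp, pp_stable hh hmn]
  · rw [toPerm_eq_pp, pp, pp, List.take_of_length_le (by simp),
      List.take_of_length_le (by simp; omega)]

/-- Decomposition: pull out the top factor. -/
theorem toPerm_decomp {h : Fin n → Option (Fin n)} {m : ℕ} (hm : m < n) {a : Fin n}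
    (hb : h ⟨m, hm⟩ = some a) (hbd : ∀ i : Fin n, (h i).isSome → i.val ≤ m) :
    toPerm h = toPerm (Function.update h ⟨m, hm⟩ none) * Equiv.swap a ⟨m, hm⟩ := by
  have h1 : toPerm h = pp h (m + 1) := by
    apply toPerm_eq_pp_of_none
    intro i hi
    by_contra hcon
    have := hbd i (by simpa [Option.isSome_iff_ne_none] using hcon)
    omega
  have h2 : toPerm (Function.update h ⟨m, hm⟩ none) = pp (Function.update h ⟨m, hm⟩ none) m := by
    apply toPerm_eq_pp_of_none
    intro i hi
    rcases eq_or_ne i ⟨m, hm⟩ with rfl | hne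
    · simp
    · rw [Function.update_of_ne hne]
      by_contra hcon
      have := hbd i (by simpa [Option.isSome_iff_ne_none] using hcon)
      exact hne (Fin.ext (le_antisymm this hi))
  rw [h1, h2, pp_succ _ hm, Gfac, hb]
  have : pp h m = pp (Function.update h ⟨m, hm⟩ none) m := by
    apply pp_congr
    intro i hi
    have hne : i ≠ ⟨m, hm⟩ := by
      intro hcon
      rw [hcon] at hi
      simp at hi
    rw [Function.update_of_ne hne]
  rw [this]
  rfl

theorem toPerm_none : toPerm (fun _ : Fin n => none) = 1 := by
  rw [toPerm_eq_pp_of_none (m := 0) (fun i _ => rfl)]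
  rfl

/-- fixes points above the support bound -/
theorem toPerm_fix {h : Fin n → Option (Fin n)} (good : ∀ (i : Fin n) a, h i = some a → a < i)
    {m : ℕ} (hbd : ∀ i : Fin n, (h i).isSome → i.val < m) (x : Fin n) (hx : m ≤ x.val) :
    toPerm h x = x := by
  have key : ∀ l : List (Equiv.Perm (Fin n)), x ∈ (l.map Equiv.Perm.support).foldr (· ⊔ ·) ⊥ →
      ∃ g ∈ l, x ∈ g.support := by
    intro l
    induction l with
    | nil => simp
    | cons g l ih =>
      intro hx'
      simp only [List.map_cons, List.foldr_cons, Finset.sup_eq_union, Finset.mem_union] at hx'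
      rcases hx' with hx' | hx'
      · exact ⟨g, List.mem_cons_self .., hx'⟩
      · obtain ⟨g', hg', hxg'⟩ := ih hx'
        exact ⟨g', List.mem_cons_of_mem _ hg', hxg'⟩
  have hs : x ∉ (toPerm h).support := by
    intro hx'
    obtain ⟨g, hg, hxg⟩ := key _ (Equiv.Perm.support_prod_le (List.ofFn (Gfac h)) hx')
    obtain ⟨i, rfl⟩ := Set.mem_range.mp ((List.mem_ofFn' _ _).mp hg)
    rcases hi : h i with _ | a
    · rw [Gfac, hi] at hxg; simp at hxg
    · rw [Gfac, hi] at hxg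
      simp only [Option.elim] at hxg
      have hai : a ≠ i := ne_of_lt (good i a hi)
      rw [Equiv.Perm.support_swap hai, Finset.mem_insert, Finset.mem_singleton] at hxg
      have him : i.val < m := hbd i (by simp [hi])
      have ham : a.val < i.val := good i a hi
      rcases hxg with rfl | rfl <;> omega
  simpa using hs

variable {n : ℕ}

def Iinv (σ : Equiv.Perm (Fin n)) : ℕ := σ.support.card - (Multiset.card σ.cycleType)

theorem card_le_sum_of_one_le {s : Multiset ℕ} (h : ∀ x ∈ s, 1 ≤ x) :
    Multiset.card s ≤ s.sum := by
  induction s using Multiset.induction_on with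
  | empty => simp
  | cons a s ih =>
    simp only [Multiset.card_cons, Multiset.sum_cons]
    have h1 := h a (Multiset.mem_cons_self a s)
    have h2 := ih (fun x hx => h x (Multiset.mem_cons_of_mem hx))
    omega

theorem card_cycleType_le (σ : Equiv.Perm (Fin n)) :
    Multiset.card σ.cycleType ≤ σ.support.card := by
  rw [← Equiv.Perm.sum_cycleType]
  exact card_le_sum_of_one_le (fun x hx => le_of_lt (Equiv.Perm.one_lt_of_mem_cycleType hx))

theorem Iinv_del {σ : Equiv.Perm (Fin n)} {b : Fin n} (hb : σ b ≠ b) :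
    Iinv σ = Iinv (σ * Equiv.swap (σ⁻¹ b) b) + 1 := by
  classical
  set c := σ.cycleOf b with hc
  have hc_mem : c ∈ σ.cycleFactorsFinset :=
    Equiv.Perm.cycleOf_mem_cycleFactorsFinset_iff.mpr (Equiv.Perm.mem_support.mpr hb)
  have hdisj : Equiv.Perm.Disjoint (σ * c⁻¹) c :=
    Equiv.Perm.disjoint_mul_inv_of_mem_cycleFactorsFinset hc_mem
  set ρ := σ * c⁻¹ with hρ
  have hσ : σ = ρ * c := by rw [hρ, inv_mul_cancel_right]
  have hcb : c b = σ b := σ.cycleOf_apply_self b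
  have hca : c (σ⁻¹ b) = b := by
    rw [hc, Equiv.Perm.cycleOf_apply, if_pos, Equiv.Perm.inv_def, Equiv.apply_symm_apply]
    exact ⟨-1, by simp⟩
  have hbc : c b ≠ b := by rw [hcb]; exact hb
  have hcyc : Equiv.Perm.IsCycle c := Equiv.Perm.isCycle_cycleOf σ hb
  have hτ : σ * Equiv.swap (σ⁻¹ b) b = ρ * (Equiv.swap b (c b) * c) := by
    calc σ * Equiv.swap (σ⁻¹ b) b = ρ * (c * Equiv.swap (σ⁻¹ b) b) := by
          rw [← mul_assoc, ← hσ]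
      _ = ρ * (Equiv.swap b (c b) * c) := by rw [Equiv.mul_swap_eq_swap_mul, hca]
  have hctσ : σ.cycleType = ρ.cycleType + c.cycleType := by
    rw [hσ, hdisj.cycleType_mul]
  have hsσ : σ.support.card = ρ.support.card + c.support.card := by
    rw [hσ, hdisj.card_support_mul]
  have hcρ := card_cycleType_le ρ
  by_cases hcc : c (c b) = b
  · -- 2-cycle case
    have hceq : c = Equiv.swap b (c b) := hcyc.eq_swap_of_apply_apply_eq_self hbc hcc
    have h1 : Equiv.swap b (c b) * c = 1 := by
      nth_rewrite 2 [hceq]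
      rw [Equiv.swap_mul_self]
    rw [hτ, h1, mul_one]
    have hctc : c.support.card = 2 := by
      nth_rewrite 1 [hceq]
      rw [Equiv.Perm.card_support_swap hbc.symm]
    have h2 : (Multiset.card σ.cycleType) = Multiset.card ρ.cycleType + 1 := by
      rw [hctσ, Multiset.card_add, hcyc.cycleType]
      rfl
    have h3 : σ.support.card = ρ.support.card + 2 := by
      rw [hsσ, hctc]
    rw [Iinv, Iinv]
    omega
  · -- longer cycle case
    set c' := Equiv.swap b (c b) * c with hc'
    have hc'cyc : Equiv.Perm.IsCycle c' := hcyc.swap_mul hbc hcc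
    have hsupp : c'.support = c.support \ {b} := Equiv.Perm.support_swap_mul_eq c b hcc
    have hbsupp : b ∈ c.support := Equiv.Perm.mem_support.mpr hbc
    have hcard : c'.support.card = c.support.card - 1 := by
      rw [hsupp, Finset.card_sdiff_of_subset (Finset.singleton_subset_iff.mpr hbsupp), Finset.card_singleton]
    have hdisj' : Equiv.Perm.Disjoint ρ c' := by
      intro x
      rcases hdisj x with hx | hx
      · exact Or.inl hx
      · refine Or.inr ?_
        by_contra hcon
        have : x ∈ c'.support := Equiv.Perm.mem_support.mpr hcon
        rw [hsupp, Finset.mem_sdiff] at this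
        exact (Equiv.Perm.mem_support.mp this.1) hx
    have hctτ : Multiset.card (σ * Equiv.swap (σ⁻¹ b) b).cycleType
        = Multiset.card ρ.cycleType + 1 := by
      rw [hτ, hdisj'.cycleType_mul, Multiset.card_add, hc'cyc.cycleType]
      rfl
    have hsτ : (σ * Equiv.swap (σ⁻¹ b) b).support.card
        = ρ.support.card + (c.support.card - 1) := by
      rw [hτ, hdisj'.card_support_mul, hcard]
    have hsc := hcyc.two_le_card_support
    have h2 : (Multiset.card σ.cycleType) = Multiset.card ρ.cycleType + 1 := by
      rw [hctσ, Multiset.card_add, hcyc.cycleType]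
      rfl
    rw [Iinv, Iinv]
    omega

theorem Iinv_ins {τ : Equiv.Perm (Fin n)} {a b : Fin n} (hτb : τ b = b) (hab : a ≠ b) :
    Iinv (τ * Equiv.swap a b) = Iinv τ + 1 := by
  set σ := τ * Equiv.swap a b with hσ
  have hσa : σ a = b := by
    rw [hσ]
    simp only [Equiv.Perm.mul_apply, Equiv.swap_apply_left, hτb]
  have hinv : σ⁻¹ b = a := by
    rw [← hσa, Equiv.Perm.inv_def, Equiv.symm_apply_apply]
  have hσb : σ b ≠ b := by
    rw [hσ]
    simp only [Equiv.Perm.mul_apply, Equiv.swap_apply_right]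
    intro hcon
    exact hab (τ.injective (hcon.trans hτb.symm))
  have key := Iinv_del hσb
  rw [hinv] at key
  have : σ * Equiv.swap a b = τ := by
    rw [hσ, mul_assoc, Equiv.swap_mul_self, mul_one]
  rw [this] at key
  omega

theorem Iinv_one : Iinv (1 : Equiv.Perm (Fin n)) = 0 := by
  rw [Iinv]
  simp

def suppH (h : Fin n → Option (Fin n)) : Finset (Fin n) :=
  Finset.univ.filter (fun i => (h i).isSome)

theorem Iinv_toPerm : ∀ (m : ℕ) (h : Fin n → Option (Fin n)),
    (∀ (i : Fin n) a, h i = some a → a < i) →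
    (∀ i : Fin n, (h i).isSome → i.val < m) →
    Iinv (toPerm h) = (suppH h).card := by
  intro m
  induction m with
  | zero =>
    intro h _ hbd
    have hnone : ∀ i, h i = none := fun i => by
      cases hi : h i with
      | none => rfl
      | some a => exact absurd (hbd i (by simp [hi])) (by omega)
    have : h = fun _ => none := funext hnone
    rw [this, toPerm_none, Iinv_one]
    simp [suppH]
  | succ m ih =>
    intro h good hbd
    rcases lt_or_ge m n with hm | hm
    · set b : Fin n := ⟨m, hm⟩ with hbdef
      cases hb : h b with
      | none =>
        apply ih h good
        intro i hi
        have h1 := hbd i hi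
        rcases Nat.lt_succ_iff_lt_or_eq.mp h1 with h2 | h2
        · exact h2
        · exfalso
          have : i = b := Fin.ext h2
          rw [this, hb] at hi
          simp at hi
      | some a =>
        set h' := Function.update h b none with hh'
        have hbd' : ∀ i : Fin n, (h' i).isSome → i.val < m := by
          intro i hi
          rcases eq_or_ne i b with rfl | hne
          · rw [hh'] at hi; simp at hi
          · rw [hh', Function.update_of_ne hne] at hi
            have h1 := hbd i hi
            rcases Nat.lt_succ_iff_lt_or_eq.mp h1 with h2 | h2
            · exact h2
            · exact absurd (Fin.ext h2 : i = b) hne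
        have good' : ∀ (i : Fin n) a', h' i = some a' → a' < i := by
          intro i a' hia'
          rcases eq_or_ne i b with rfl | hne
          · rw [hh', Function.update_self] at hia'; exact absurd hia' (by simp)
          · rw [hh', Function.update_of_ne hne] at hia'; exact good i a' hia'
        have hdec : toPerm h = toPerm h' * Equiv.swap a b :=
          toPerm_decomp hm hb (fun i hi => Nat.lt_succ_iff.mp (hbd i hi))
        have hfix : toPerm h' b = b :=
          toPerm_fix good' hbd' b (le_refl m)
        have hab : a ≠ b := ne_of_lt (good b a hb)
        rw [hdec, Iinv_ins hfix hab, ih h' good' hbd']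
        have hsupp : suppH h = insert b (suppH h') := by
          ext i
          simp only [suppH, Finset.mem_filter, Finset.mem_univ, true_and, Finset.mem_insert]
          rcases eq_or_ne i b with rfl | hne
          · simp [hb, hh']
          · rw [hh', Function.update_of_ne hne]
            simp [hne]
        have hbnot : b ∉ suppH h' := by
          simp [suppH, hh']
        rw [hsupp, Finset.card_insert_of_notMem hbnot]
    · apply ih h good
      intro i hi
      exact lt_of_lt_of_le i.isLt hm

theorem toPerm_inj : ∀ (m : ℕ) (h₁ h₂ : Fin n → Option (Fin n)),
    (∀ (i : Fin n) a, h₁ i = some a → a < i) →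
    (∀ (i : Fin n) a, h₂ i = some a → a < i) →
    (∀ i : Fin n, (h₁ i).isSome → i.val < m) →
    (∀ i : Fin n, (h₂ i).isSome → i.val < m) →
    toPerm h₁ = toPerm h₂ → h₁ = h₂ := by
  intro m
  induction m with
  | zero =>
    intro h₁ h₂ _ _ hbd₁ hbd₂ _
    funext i
    cases h1 : h₁ i with
    | none =>
      cases h2 : h₂ i with
      | none => rfl
      | some a => exact absurd (hbd₂ i (by simp [h2])) (by omega)
    | some a => exact absurd (hbd₁ i (by simp [h1])) (by omega)
  | succ m ih =>
    intro h₁ h₂ good₁ good₂ hbd₁ hbd₂ heq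
    rcases lt_or_ge m n with hm | hm
    · set b : Fin n := ⟨m, hm⟩ with hbdef
      -- helper: shrink bound when value at b is none
      have shrink : ∀ h : Fin n → Option (Fin n), (∀ i : Fin n, (h i).isSome → i.val < m + 1) →
          h b = none → ∀ i : Fin n, (h i).isSome → i.val < m := by
        intro h hbd hb i hi
        rcases Nat.lt_succ_iff_lt_or_eq.mp (hbd i hi) with h2 | h2
        · exact h2
        · exfalso; rw [(Fin.ext h2 : i = b), hb] at hi; simp at hi
      -- key: if h b = some a then toPerm h does not fix b; if none, it fixes b
      have moves : ∀ (h : Fin n → Option (Fin n)) a, (∀ (i : Fin n) a', h i = some a' → a' < i) →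
          (∀ i : Fin n, (h i).isSome → i.val < m + 1) → h b = some a →
          toPerm h = toPerm (Function.update h b none) * Equiv.swap a b
            ∧ toPerm (Function.update h b none) b = b ∧ toPerm h b ≠ b ∧ toPerm h a = b := by
        intro h a good hbd hb
        set h' := Function.update h b none with hh'
        have hbd' : ∀ i : Fin n, (h' i).isSome → i.val < m := by
          intro i hi
          rcases eq_or_ne i b with rfl | hne
          · rw [hh'] at hi; simp at hi
          · rw [hh', Function.update_of_ne hne] at hi
            rcases Nat.lt_succ_iff_lt_or_eq.mp (hbd i hi) with h2 | h2
            · exact h2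
            · exact absurd (Fin.ext h2 : i = b) hne
        have good' : ∀ (i : Fin n) a', h' i = some a' → a' < i := by
          intro i a' hia'
          rcases eq_or_ne i b with rfl | hne
          · rw [hh', Function.update_self] at hia'; exact absurd hia' (by simp)
          · rw [hh', Function.update_of_ne hne] at hia'; exact good i a' hia'
        have hdec : toPerm h = toPerm h' * Equiv.swap a b :=
          toPerm_decomp hm hb (fun i hi => Nat.lt_succ_iff.mp (hbd i hi))
        have hfix : toPerm h' b = b := toPerm_fix good' hbd' b (le_refl m)
        have hab : a ≠ b := ne_of_lt (good b a hb)
        refine ⟨hdec, hfix, ?_, ?_⟩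
        · rw [hdec]
          simp only [Equiv.Perm.mul_apply, Equiv.swap_apply_right]
          intro hcon
          exact hab ((toPerm h').injective (hcon.trans hfix.symm))
        · rw [hdec]
          simp only [Equiv.Perm.mul_apply, Equiv.swap_apply_left, hfix]
      cases hb₁ : h₁ b with
      | none =>
        cases hb₂ : h₂ b with
        | none =>
          exact ih h₁ h₂ good₁ good₂ (shrink h₁ hbd₁ hb₁) (shrink h₂ hbd₂ hb₂) heq
        | some a₂ =>
          exfalso
          obtain ⟨_, _, hmoves, _⟩ := moves h₂ a₂ good₂ hbd₂ hb₂
          have hfix₁ : toPerm h₁ b = b := toPerm_fix good₁ (shrink h₁ hbd₁ hb₁) b (le_refl m)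
          rw [heq] at hfix₁
          exact hmoves hfix₁
      | some a₁ =>
        cases hb₂ : h₂ b with
        | none =>
          exfalso
          obtain ⟨_, _, hmoves, _⟩ := moves h₁ a₁ good₁ hbd₁ hb₁
          have hfix₂ : toPerm h₂ b = b := toPerm_fix good₂ (shrink h₂ hbd₂ hb₂) b (le_refl m)
          rw [← heq] at hfix₂
          exact hmoves hfix₂
        | some a₂ =>
          obtain ⟨hdec₁, hfix₁, _, happ₁⟩ := moves h₁ a₁ good₁ hbd₁ hb₁
          obtain ⟨hdec₂, hfix₂, _, happ₂⟩ := moves h₂ a₂ good₂ hbd₂ hb₂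
          have haa : a₁ = a₂ := by
            have : toPerm h₁ a₁ = toPerm h₁ a₂ := by
              rw [happ₁, heq, happ₂]
            exact (toPerm h₁).injective this
          subst haa
          have hττ : toPerm (Function.update h₁ b none) = toPerm (Function.update h₂ b none) := by
            have := heq
            rw [hdec₁, hdec₂] at this
            exact mul_right_cancel this
          -- bounds and goodness for updated functions (recompute)
          have hbd₁' : ∀ i : Fin n, ((Function.update h₁ b none) i).isSome → i.val < m := by
            intro i hi
            rcases eq_or_ne i b with rfl | hne
            · simp at hi
            · rw [Function.update_of_ne hne] at hi
              rcases Nat.lt_succ_iff_lt_or_eq.mp (hbd₁ i hi) with h2 | h2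
              · exact h2
              · exact absurd (Fin.ext h2 : i = b) hne
          have hbd₂' : ∀ i : Fin n, ((Function.update h₂ b none) i).isSome → i.val < m := by
            intro i hi
            rcases eq_or_ne i b with rfl | hne
            · simp at hi
            · rw [Function.update_of_ne hne] at hi
              rcases Nat.lt_succ_iff_lt_or_eq.mp (hbd₂ i hi) with h2 | h2
              · exact h2
              · exact absurd (Fin.ext h2 : i = b) hne
          have good₁' : ∀ (i : Fin n) a', (Function.update h₁ b none) i = some a' → a' < i := by
            intro i a' hia'
            rcases eq_or_ne i b with rfl | hne
            · simp at hia'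
            · rw [Function.update_of_ne hne] at hia'; exact good₁ i a' hia'
          have good₂' : ∀ (i : Fin n) a', (Function.update h₂ b none) i = some a' → a' < i := by
            intro i a' hia'
            rcases eq_or_ne i b with rfl | hne
            · simp at hia'
            · rw [Function.update_of_ne hne] at hia'; exact good₂ i a' hia'
          have hupd := ih _ _ good₁' good₂' hbd₁' hbd₂' hττ
          funext i
          rcases eq_or_ne i b with rfl | hne
          · rw [hb₁, hb₂]
          · have := congrFun hupd i
            rwa [Function.update_of_ne hne, Function.update_of_ne hne] at this
    · exact ih h₁ h₂ good₁ good₂ (fun i hi => lt_of_lt_of_le i.isLt hm)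
        (fun i hi => lt_of_lt_of_le i.isLt hm) heq

theorem toPerm_surj : ∀ (m : ℕ) (σ : Equiv.Perm (Fin n)),
    (∀ x : Fin n, m ≤ x.val → σ x = x) →
    ∃ h : Fin n → Option (Fin n),
      (∀ (i : Fin n) a, h i = some a → a < i) ∧
      (∀ i : Fin n, (h i).isSome → i.val < m) ∧ toPerm h = σ := by
  intro m
  induction m with
  | zero =>
    intro σ hfix
    refine ⟨fun _ => none, by simp, by simp, ?_⟩
    rw [toPerm_none]
    ext x
    rw [hfix x (Nat.zero_le _)]
    rfl
  | succ m ih =>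
    intro σ hfix
    rcases lt_or_ge m n with hm | hm
    · set b : Fin n := ⟨m, hm⟩ with hbdef
      have hbv : b.val = m := rfl
      by_cases hσb : σ b = b
      · obtain ⟨h, good, hbd, htp⟩ := ih σ (by
          intro x hx
          rcases Nat.lt_or_ge m x.val with h1 | h1
          · exact hfix x h1
          · have : x = b := Fin.ext (le_antisymm (by omega) hx)
            rw [this]; exact hσb)
        exact ⟨h, good, fun i hi => Nat.lt_succ_of_lt (hbd i hi), htp⟩
      · set a := σ⁻¹ b with hadef
        have hσa : σ a = b := σ.apply_symm_apply b
        have hab : a ≠ b := fun hcon => hσb ((congrArg σ hcon).symm.trans hσa)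
        have ham : a.val < m := by
          by_contra hcon
          push_neg at hcon
          rcases Nat.lt_or_ge m a.val with h1 | h1
          · have := hfix a h1
            rw [this] at hσa
            exact hab hσa
          · exact hab (Fin.ext (le_antisymm h1 hcon))
        set τ := σ * Equiv.swap a b with hτdef
        have hτfix : ∀ x : Fin n, m ≤ x.val → τ x = x := by
          intro x hx
          rcases eq_or_ne x b with rfl | hne
          · rw [hτdef]
            simp only [Equiv.Perm.mul_apply, Equiv.swap_apply_right]
            exact hσa
          · have hx1 : m + 1 ≤ x.val := by
              rcases Nat.lt_or_ge m x.val with h1 | h1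
              · exact h1
              · exact absurd (Fin.ext (le_antisymm h1 hx) : x = b) hne
            have hxa : x ≠ a := by
              intro hcon
              rw [hcon] at hx1
              omega
            rw [hτdef]
            simp only [Equiv.Perm.mul_apply]
            rw [Equiv.swap_apply_of_ne_of_ne hxa hne]
            exact hfix x hx1
        obtain ⟨h', good', hbd', htp'⟩ := ih τ hτfix
        set h := Function.update h' b (some a) with hhdef
        have hh'b : h' b = none := by
          cases hb' : h' b with
          | none => rfl
          | some x => exact absurd (hbd' b (by simp [hb'])) (by omega)
        have hupd : Function.update h b none = h' := by
          funext i
          rcases eq_or_ne i b with rfl | hne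
          · rw [Function.update_self, hh'b]
          · rw [Function.update_of_ne hne, hhdef, Function.update_of_ne hne]
        have good : ∀ (i : Fin n) a', h i = some a' → a' < i := by
          intro i a' hia'
          rcases eq_or_ne i b with rfl | hne
          · rw [hhdef, Function.update_self] at hia'
            cases hia'
            exact ham
          · rw [hhdef, Function.update_of_ne hne] at hia'
            exact good' i a' hia'
        have hbd : ∀ i : Fin n, (h i).isSome → i.val < m + 1 := by
          intro i hi
          rcases eq_or_ne i b with rfl | hne
          · omega
          · rw [hhdef, Function.update_of_ne hne] at hi
            exact Nat.lt_succ_of_lt (hbd' i hi)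
        refine ⟨h, good, hbd, ?_⟩
        have hdec : toPerm h = toPerm (Function.update h b none) * Equiv.swap a b :=
          toPerm_decomp hm (by rw [hhdef, Function.update_self]) (fun i hi => Nat.lt_succ_iff.mp (hbd i hi))
        rw [hdec, hupd, htp', hτdef, mul_assoc, Equiv.swap_mul_self, mul_one]
    · obtain ⟨h, good, hbd, htp⟩ := ih σ (fun x hx => absurd (lt_of_lt_of_le x.isLt hm) (not_lt.mpr hx))
      exact ⟨h, good, fun i hi => Nat.lt_succ_of_lt (hbd i hi), htp⟩


/-- The Jucys–Murphy element `J_b = Σ_{a < b} (a b)` in the group algebra `ℂ[S_n]`. -/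
noncomputable def JM (n : ℕ) (b : Fin n) : MonoidAlgebra ℂ (Equiv.Perm (Fin n)) :=
  ∑ a ∈ Finset.univ.filter (· < b), MonoidAlgebra.of ℂ (Equiv.Perm (Fin n)) (Equiv.swap a b)

/-- The `d`-th elementary symmetric polynomial evaluated at the Jucys–Murphy elements
(products taken in increasing order; the `J_b` pairwise commute). -/
noncomputable def esymmJM (n : ℕ) (d : ℕ) : MonoidAlgebra ℂ (Equiv.Perm (Fin n)) :=
  ∑ S ∈ Finset.univ.powersetCard d, ((S.sort (· ≤ ·)).map (JM n)).prod

/-- The cycle type of a permutation of `Fin n`, including fixed points as parts equal to `1`. -/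
noncomputable def fullCycleType {n : ℕ} (σ : Equiv.Perm (Fin n)) : Multiset ℕ :=
  σ.cycleType + Multiset.replicate (n - σ.support.card) 1

/-- The cycle sum `C_ν = Σ_{g ∈ cyc(ν)} g ∈ ℂ[S_n]` over the conjugacy class of
cycle type `ν`. -/
noncomputable def cycleSum (n : ℕ) (ν : Nat.Partition n) :
    MonoidAlgebra ℂ (Equiv.Perm (Fin n)) :=
  ∑ σ ∈ Finset.univ.filter fun σ : Equiv.Perm (Fin n) => fullCycleType σ = ν.parts,
    MonoidAlgebra.of ℂ (Equiv.Perm (Fin n)) σ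


-- dropping identity factors from a list product
theorem prod_map_ite_one {M : Type*} [Monoid M] {ι : Type*} (p : ι → Prop) [DecidablePred p]
    (f : ι → M) : ∀ l : List ι,
    (l.map fun i => if p i then f i else 1).prod = ((l.filter fun i => decide (p i)).map f).prod := by
  intro l
  induction l with
  | nil => rfl
  | cons a l ih =>
    by_cases ha : p a
    · rw [List.map_cons, List.prod_cons, if_pos ha, List.filter_cons_of_pos (by simpa using ha),
        List.map_cons, List.prod_cons, ih]
    · rw [List.map_cons, List.prod_cons, if_neg ha, List.filter_cons_of_neg (by simpa using ha),
        one_mul, ih]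

theorem finRange_filter_eq_sort (S : Finset (Fin n)) :
    (List.finRange n).filter (fun i => decide (i ∈ S)) = S.sort (· ≤ ·) := by
  refine (fun h1 h2 h3 => List.Perm.eq_of_pairwise' (r := (· ≤ ·)) h2 h3 h1) ?_ ?_ ?_
  · apply List.perm_of_nodup_nodup_toFinset_eq
    · exact (List.nodup_finRange n).filter _
    · exact S.sort_nodup (· ≤ ·)
    · ext x
      simp [List.mem_filter, Finset.mem_sort]
  · exact (List.sortedLT_finRange n).sortedLE.pairwise.sublist List.filter_sublist
  · exact S.pairwise_sort (· ≤ ·)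

theorem sortJM_eq_ofFn (S : Finset (Fin n)) :
    ((S.sort (· ≤ ·)).map (JM n)).prod
      = (List.ofFn fun i : Fin n => if i ∈ S then JM n i else 1).prod := by
  rw [List.ofFn_eq_map, prod_map_ite_one, finRange_filter_eq_sort]

noncomputable def Ffac (i : Fin n) (o : Option (Fin n)) : MonoidAlgebra ℂ (Equiv.Perm (Fin n)) :=
  MonoidAlgebra.of ℂ (Equiv.Perm (Fin n)) (o.elim 1 fun a => Equiv.swap a i)

def OS (S : Finset (Fin n)) (i : Fin n) : Finset (Option (Fin n)) :=
  if i ∈ S then (Finset.univ.filter (· < i)).image some else {none}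

theorem JM_ite_eq_sum (S : Finset (Fin n)) (i : Fin n) :
    (if i ∈ S then JM n i else 1) = ∑ o ∈ OS S i, Ffac i o := by
  by_cases hi : i ∈ S
  · rw [if_pos hi, OS, if_pos hi, Finset.sum_image (by intro x _ y _ h; exact Option.some_injective _ h)]
    rw [JM]
    rfl
  · rw [if_neg hi, OS, if_neg hi, Finset.sum_singleton, Ffac]
    exact map_one (MonoidAlgebra.of ℂ (Equiv.Perm (Fin n)))

theorem ofFn_Ffac_prod (g : Fin n → Option (Fin n)) :
    (List.ofFn fun i => Ffac i (g i)).prod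
      = MonoidAlgebra.of ℂ (Equiv.Perm (Fin n)) (toPerm g) := by
  rw [toPerm, map_list_prod, List.map_ofFn]
  rfl

theorem mem_piFinset_OS {S : Finset (Fin n)} {g : Fin n → Option (Fin n)}
    (hg : g ∈ Fintype.piFinset (OS S)) :
    (∀ (i : Fin n) a, g i = some a → a < i) ∧ suppH g = S := by
  rw [Fintype.mem_piFinset] at hg
  have hmem : ∀ i : Fin n, (i ∈ S → ∃ a, a < i ∧ g i = some a) ∧ (i ∉ S → g i = none) := by
    intro i
    constructor
    · intro hi
      have := hg i
      rw [OS, if_pos hi, Finset.mem_image] at this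
      obtain ⟨a, ha, hai⟩ := this
      simp only [Finset.mem_filter] at ha
      exact ⟨a, ha.2, hai.symm⟩
    · intro hi
      have := hg i
      rw [OS, if_neg hi, Finset.mem_singleton] at this
      exact this
  constructor
  · intro i a hia
    by_cases hi : i ∈ S
    · obtain ⟨a', ha', hia'⟩ := (hmem i).1 hi
      rw [hia'] at hia
      cases hia
      exact ha'
    · rw [(hmem i).2 hi] at hia
      cases hia
  · ext i
    simp only [suppH, Finset.mem_filter, Finset.mem_univ, true_and]
    constructor
    · intro hi
      by_contra hcon
      rw [(hmem i).2 hcon] at hi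
      simp at hi
    · intro hi
      obtain ⟨a, _, ha⟩ := (hmem i).1 hi
      simp [ha]

theorem mem_piFinset_OS' {g : Fin n → Option (Fin n)}
    (good : ∀ (i : Fin n) a, g i = some a → a < i) :
    g ∈ Fintype.piFinset (OS (suppH g)) := by
  rw [Fintype.mem_piFinset]
  intro i
  by_cases hi : i ∈ suppH g
  · rw [OS, if_pos hi, Finset.mem_image]
    have hi' : (g i).isSome := by
      simpa [suppH] using hi
    obtain ⟨a, ha⟩ := Option.isSome_iff_exists.mp hi'
    exact ⟨a, Finset.mem_filter.mpr ⟨Finset.mem_univ a, good i a ha⟩, ha.symm⟩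
  · rw [OS, if_neg hi, Finset.mem_singleton]
    have : ¬ (g i).isSome := by
      simpa [suppH] using hi
    cases hgi : g i with
    | none => rfl
    | some a => rw [hgi] at this; simp at this

theorem jucys_perm (d : ℕ) :
    esymmJM n d = ∑ σ ∈ Finset.univ.filter (fun σ : Equiv.Perm (Fin n) => Iinv σ = d),
      MonoidAlgebra.of ℂ (Equiv.Perm (Fin n)) σ := by
  classical
  have step1 : esymmJM n d = ∑ S ∈ Finset.univ.powersetCard d,
      ∑ g ∈ Fintype.piFinset (OS S), MonoidAlgebra.of ℂ (Equiv.Perm (Fin n)) (toPerm g) := by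
    rw [esymmJM]
    refine Finset.sum_congr rfl fun S _ => ?_
    rw [sortJM_eq_ofFn]
    have : (List.ofFn fun i : Fin n => if i ∈ S then JM n i else 1)
        = List.ofFn fun i : Fin n => ∑ o ∈ OS S i, Ffac i o := by
      congr 1
      funext i
      exact JM_ite_eq_sum S i
    rw [this, prod_ofFn_sum]
    exact Finset.sum_congr rfl fun g _ => ofFn_Ffac_prod g
  have step2 : ∑ S ∈ Finset.univ.powersetCard d,
      ∑ g ∈ Fintype.piFinset (OS S), MonoidAlgebra.of ℂ (Equiv.Perm (Fin n)) (toPerm g)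
      = ∑ h ∈ Finset.univ.filter (fun h : Fin n → Option (Fin n) =>
          (∀ (i : Fin n) a, h i = some a → a < i) ∧ (suppH h).card = d),
        MonoidAlgebra.of ℂ (Equiv.Perm (Fin n)) (toPerm h) := by
    rw [Finset.sum_sigma']
    apply Finset.sum_nbij' (i := fun p => p.2) (j := fun h => ⟨suppH h, h⟩)
    · rintro ⟨S, g⟩ hp
      simp only [Finset.mem_sigma, Finset.mem_powersetCard_univ] at hp
      obtain ⟨good, hsupp⟩ := mem_piFinset_OS hp.2
      simp only [Finset.mem_filter, Finset.mem_univ, true_and]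
      exact ⟨good, by rw [hsupp, hp.1]⟩
    · intro h hh
      simp only [Finset.mem_filter, Finset.mem_univ, true_and] at hh
      simp only [Finset.mem_sigma, Finset.mem_powersetCard_univ]
      exact ⟨hh.2, mem_piFinset_OS' hh.1⟩
    · rintro ⟨S, g⟩ hp
      simp only [Finset.mem_sigma, Finset.mem_powersetCard_univ] at hp
      obtain ⟨_, hsupp⟩ := mem_piFinset_OS hp.2
      exact Sigma.ext hsupp (heq_of_eq rfl)
    · intro h _
      rfl
    · rintro ⟨S, g⟩ _
      rfl
  rw [step1, step2]
  apply Finset.sum_bij (i := fun h _ => toPerm h)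
  · intro h hh
    simp only [Finset.mem_filter, Finset.mem_univ, true_and] at hh ⊢
    rw [Iinv_toPerm n h hh.1 (fun i _ => i.isLt)]
    exact hh.2
  · intro h₁ hh₁ h₂ hh₂ heq
    simp only [Finset.mem_filter, Finset.mem_univ, true_and] at hh₁ hh₂
    exact toPerm_inj n h₁ h₂ hh₁.1 hh₂.1 (fun i _ => i.isLt) (fun i _ => i.isLt) heq
  · intro σ hσ
    simp only [Finset.mem_filter, Finset.mem_univ, true_and] at hσ
    obtain ⟨h, good, _, htp⟩ := toPerm_surj n σ (fun x hx => absurd x.isLt (not_lt.mpr hx))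
    refine ⟨h, ?_, htp⟩
    simp only [Finset.mem_filter, Finset.mem_univ, true_and]
    refine ⟨good, ?_⟩
    rw [← Iinv_toPerm n h good (fun i _ => i.isLt), htp, hσ]
  · intro h _
    rfl

noncomputable def pOf (σ : Equiv.Perm (Fin n)) : Nat.Partition n where
  parts := fullCycleType σ
  parts_pos := by
    intro i hi
    rw [fullCycleType, Multiset.mem_add] at hi
    rcases hi with hi | hi
    · exact lt_of_lt_of_le (by norm_num) (Equiv.Perm.two_le_of_mem_cycleType hi)
    · rw [Multiset.eq_of_mem_replicate hi]
      norm_num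
  parts_sum := by
    rw [fullCycleType, Multiset.sum_add, Equiv.Perm.sum_cycleType, Multiset.sum_replicate,
      smul_eq_mul, mul_one]
    have : σ.support.card ≤ n := by
      simpa using Finset.card_le_univ σ.support
    omega

theorem sub_card_pOf (σ : Equiv.Perm (Fin n)) : n - (fullCycleType σ).card = Iinv σ := by
  have h1 : σ.support.card ≤ n := by simpa using Finset.card_le_univ σ.support
  have h2 := card_cycleType_le σ
  rw [fullCycleType, Multiset.card_add, Multiset.card_replicate, Iinv]
  omega

theorem jucys (d : ℕ) :
    esymmJM n d = ∑ ν ∈ Finset.univ.filter (fun ν : Nat.Partition n => n - ν.parts.card = d),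
      cycleSum n ν := by
  classical
  have h1 : ∀ ν : Nat.Partition n,
      cycleSum n ν = ∑ σ ∈ Finset.univ.filter (fun σ => pOf σ = ν),
        MonoidAlgebra.of ℂ (Equiv.Perm (Fin n)) σ := by
    intro ν
    rw [cycleSum]
    apply Finset.sum_congr _ (fun _ _ => rfl)
    apply Finset.filter_congr
    intro σ _
    constructor
    · intro hσ; exact Nat.Partition.ext hσ
    · intro hσ; rw [← hσ]; rfl
  calc esymmJM n d
      = ∑ σ ∈ Finset.univ.filter (fun σ : Equiv.Perm (Fin n) => Iinv σ = d),
        MonoidAlgebra.of ℂ (Equiv.Perm (Fin n)) σ := jucys_perm d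
    _ = ∑ σ ∈ Finset.univ.filter (fun σ : Equiv.Perm (Fin n) =>
          pOf σ ∈ Finset.univ.filter (fun ν : Nat.Partition n => n - ν.parts.card = d)),
        MonoidAlgebra.of ℂ (Equiv.Perm (Fin n)) σ := by
        apply Finset.sum_congr _ (fun _ _ => rfl)
        apply Finset.filter_congr
        intro σ _
        simp only [Finset.mem_filter, Finset.mem_univ, true_and]
        rw [show (pOf σ).parts = fullCycleType σ from rfl, sub_card_pOf σ]
    _ = ∑ ν ∈ Finset.univ.filter (fun ν : Nat.Partition n => n - ν.parts.card = d),
        cycleSum n ν := by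
        rw [← Finset.sum_fiberwise_eq_sum_filter]
        exact Finset.sum_congr rfl (fun ν _ => (h1 ν).symm)


/-- for a partition `λ = (λ_1,…,λ_k)` and a partition `μ` of `n`,
`e_λ(J_1,…,J_n) · C_μ = Σ C_{μ^(1)} ⋯ C_{μ^(k)} C_μ`, summed over all ordered `k`-tuples
`(μ^(1),…,μ^(k))` of partitions of `n` with colength `ℓ*(μ^(i)) = n − ℓ(μ^(i)) = λ_i`. -/
theorem esymmJM_mul_cycleSum (n : ℕ) (hn : 1 ≤ n) (k : ℕ) (hk : 1 ≤ k) (lam : Fin k → ℕ)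
    (hpos : ∀ i, 0 < lam i) (hanti : Antitone lam) (μ : Nat.Partition n) :
    (List.ofFn fun i : Fin k => esymmJM n (lam i)).prod * cycleSum n μ =
      ∑ μs ∈ Finset.univ.filter
          (fun μs : Fin k → Nat.Partition n => ∀ i, n - (μs i).parts.card = lam i),
        (List.ofFn fun i : Fin k => cycleSum n (μs i)).prod * cycleSum n μ := by
  classical
  have h1 : (List.ofFn fun i : Fin k => esymmJM n (lam i))
      = List.ofFn fun i : Fin k =>
          ∑ ν ∈ Finset.univ.filter (fun ν : Nat.Partition n => n - ν.parts.card = lam i),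
            cycleSum n ν := by
    congr 1
    funext i
    exact jucys (lam i)
  rw [h1, prod_ofFn_sum, Finset.sum_mul]
  apply Finset.sum_congr
  · ext μs
    simp only [Fintype.mem_piFinset, Finset.mem_filter, Finset.mem_univ, true_and]
  · intro μs _
    rfl
end

section
/- For every n ≥ 1, every h, g ∈ S_n, and every d ≥ 0, the number of strictly monotone sequences of transpositions (τ_1,…,τ_d) in S_n with τ_d ⋯ τ_1 h = g equals 1 if d = ℓ*(g h^{-1}) and equals 0 otherwise. In particular, for fixed h of cycle type μ, the number of strictly monotone d-step paths from h into the class cyc(ν) equals the number of σ ∈ S_n with ℓ*(σ) = d and σh ∈ cyc(ν). -/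
/-- For a transposition `τ = (a b)` with `a < b`, the "second element" `b`,
realized as the largest point moved by `τ`. -/
def bval {n : ℕ} (τ : Equiv.Perm (Fin n)) : ℕ :=
  τ.support.sup fun x => (x : ℕ)

/-- The colength `ℓ*(σ) = n − c(σ)`, where `c(σ)` is the number of cycles of `σ`
(fixed points counted as cycles of length 1). -/
noncomputable def colength {n : ℕ} (σ : Equiv.Perm (Fin n)) : ℕ :=
  n - (σ.cycleType.card + (n - σ.support.card))

open Equiv Equiv.Perm

lemma two_mul_card_cycleType_le {n : ℕ} (σ : Equiv.Perm (Fin n)) :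
    2 * Multiset.card σ.cycleType ≤ σ.support.card := by
  rw [← σ.sum_cycleType]
  calc 2 * Multiset.card σ.cycleType = Multiset.card σ.cycleType • 2 := by ring
  _ ≤ σ.cycleType.sum := Multiset.card_nsmul_le_sum fun x hx => Equiv.Perm.two_le_of_mem_cycleType hx

lemma colength_eq {n : ℕ} (σ : Equiv.Perm (Fin n)) :
    colength σ = σ.support.card - Multiset.card σ.cycleType := by
  have h1 := two_mul_card_cycleType_le σ
  have h2 : σ.support.card ≤ n := by
    simpa using Finset.card_le_card (Finset.subset_univ σ.support)
  unfold colength; omega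

lemma colength_swap_mul {n : ℕ} (σ : Equiv.Perm (Fin n)) (b : Fin n) (hb : σ b ≠ b) :
    colength (Equiv.swap b (σ b) * σ) + 1 = colength σ := by
  set c := σ.cycleOf b with hc_def
  have hmem : c ∈ σ.cycleFactorsFinset :=
    cycleOf_mem_cycleFactorsFinset_iff.2 (mem_support.2 hb)
  have hd : Perm.Disjoint (σ * c⁻¹) c := disjoint_mul_inv_of_mem_cycleFactorsFinset hmem
  set δ := σ * c⁻¹ with hδ_def
  have hσ : σ = δ * c := by rw [hδ_def]; group
  have hcb : c b = σ b := σ.cycleOf_apply_self b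
  have hcyc : c.IsCycle := σ.isCycle_cycleOf hb
  have hbc : b ∈ c.support := mem_support.2 (by rw [hcb]; exact hb)
  have hsbc : σ b ∈ c.support := by
    rw [← hcb]; exact apply_mem_support.2 hbc
  set τ := Equiv.swap b (σ b) with hτ_def
  have hτsupp : τ.support ⊆ c.support := by
    rw [hτ_def, Equiv.Perm.support_swap (Ne.symm hb)]
    intro x hx
    simp only [Finset.mem_insert, Finset.mem_singleton] at hx
    rcases hx with rfl | rfl
    · exact hbc
    · exact hsbc
  have hdτ : Perm.Disjoint δ τ :=
    Perm.disjoint_iff_disjoint_support.2 <|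
      Finset.disjoint_of_subset_right hτsupp (Perm.disjoint_iff_disjoint_support.1 hd)
  have hkey : τ * σ = δ * (τ * c) := by
    rw [hσ, ← mul_assoc, ← hdτ.commute.eq, mul_assoc]
  have hτc_supp : (τ * c).support ⊆ c.support := by
    intro x hx
    rw [mem_support] at hx
    by_contra hxc
    rw [notMem_support] at hxc
    apply hx
    rw [mul_apply, hxc]
    apply swap_apply_of_ne_of_ne
    · rintro rfl; exact (mem_support.1 hbc) hxc
    · rintro rfl; exact (mem_support.1 hsbc) hxc
  have hdτc : Perm.Disjoint δ (τ * c) :=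
    Perm.disjoint_iff_disjoint_support.2 <|
      Finset.disjoint_of_subset_right hτc_supp (Perm.disjoint_iff_disjoint_support.1 hd)
  have hctype : σ.cycleType = δ.cycleType + c.cycleType := by
    rw [hσ, hd.cycleType_mul]
  have hcsupp : σ.support.card = δ.support.card + c.support.card := by
    rw [hσ, hd.card_support_mul]
  have hδle := two_mul_card_cycleType_le δ
  have hc2 : 2 ≤ c.support.card := hcyc.two_le_card_support
  have hcct : Multiset.card c.cycleType = 1 := by
    rw [hcyc.cycleType]; simp
  by_cases h1 : τ * c = 1
  · -- c is exactly the swap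
    have hρ : τ * σ = δ := by rw [hkey, h1, mul_one]
    have hcswap : c = τ := by
      have := congrArg (fun x => τ * x) h1.symm
      simpa [← mul_assoc, hτ_def, Equiv.swap_mul_self] using this |>.symm
    have hcsupp2 : c.support.card = 2 := by
      rw [hcswap, hτ_def, Equiv.Perm.support_swap (Ne.symm hb)]
      rw [Finset.card_insert_of_notMem
        (by simp only [Finset.mem_singleton]; exact Ne.symm hb), Finset.card_singleton]
    rw [hρ, colength_eq, colength_eq, hctype, hcsupp, Multiset.card_add, hcct, hcsupp2]
    omega
  · -- τ * c is a cycle of length c.support.card - 1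
    have hcbb : c b ≠ b := by rw [hcb]; exact hb
    have hccb : c (c b) ≠ b := by
      intro hccb
      apply h1
      have hct : c = τ := by
        rw [hτ_def, ← hcb]; exact hcyc.eq_swap_of_apply_apply_eq_self hcbb hccb
      rw [hct, hτ_def, Equiv.swap_mul_self]
    have hτc : τ = Equiv.swap b (c b) := by rw [hτ_def, hcb]
    have hcyc' : (τ * c).IsCycle := by
      rw [hτc]; exact hcyc.swap_mul hcbb hccb
    have hsupp' : (τ * c).support = c.support \ {b} := by
      rw [hτc]; exact Equiv.Perm.support_swap_mul_eq c b hccb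
    have hcard' : (τ * c).support.card = c.support.card - 1 := by
      rw [hsupp', Finset.card_sdiff_of_subset (Finset.singleton_subset_iff.2 hbc), Finset.card_singleton]
    have hctype' : (τ * σ).cycleType = δ.cycleType + (τ * c).cycleType := by
      rw [hkey, hdτc.cycleType_mul]
    have hcsupp' : (τ * σ).support.card = δ.support.card + (τ * c).support.card := by
      rw [hkey, hdτc.card_support_mul]
    have hcct' : Multiset.card (τ * c).cycleType = 1 := by
      rw [hcyc'.cycleType]; simp
    rw [colength_eq, colength_eq, hctype, hctype', hcsupp, hcsupp', Multiset.card_add,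
      Multiset.card_add, hcct, hcct', hcard']
    omega


lemma isSwap_lt {n : ℕ} {τ : Equiv.Perm (Fin n)} (h : τ.IsSwap) :
    ∃ a b : Fin n, a < b ∧ τ = Equiv.swap a b := by
  obtain ⟨x, y, hxy, rfl⟩ := h
  rcases lt_or_gt_of_ne hxy with h | h
  · exact ⟨x, y, h, rfl⟩
  · exact ⟨y, x, h, Equiv.swap_comm x y⟩

lemma bval_swap {n : ℕ} {a b : Fin n} (hab : a < b) :
    bval (Equiv.swap a b) = (b : ℕ) := by
  rw [bval, Equiv.Perm.support_swap hab.ne]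
  rw [Finset.sup_insert, Finset.sup_singleton]
  exact max_eq_right (le_of_lt hab)

lemma swap_apply_of_gt {n : ℕ} {a b x : Fin n} (hab : a < b) (hx : (b : ℕ) < (x : ℕ)) :
    Equiv.swap a b x = x := by
  apply Equiv.swap_apply_of_ne_of_ne
  · intro h; subst h; exact absurd (lt_trans hab (by exact hx)) (lt_irrefl _)
  · intro h; subst h; exact lt_irrefl _ hx

lemma prod_fix {n : ℕ} (l : List (Equiv.Perm (Fin n))) (x : Fin n)
    (h : ∀ p ∈ l, p x = x) : l.prod x = x := by
  induction l with
  | nil => simp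
  | cons p l ih =>
    rw [List.prod_cons, Equiv.Perm.mul_apply, ih (fun q hq => h q (List.mem_cons_of_mem p hq)),
      h p List.mem_cons_self]

/-- structural lemma -/
lemma structure_lemma {n d : ℕ} (τ : Fin (d + 1) → Equiv.Perm (Fin n))
    (hs : ∀ m, (τ m).IsSwap) (hm : StrictMono fun m => bval (τ m))
    {σ : Equiv.Perm (Fin n)} (hσ : (List.ofFn τ).reverse.prod = σ) :
    ∃ b : Fin n, (b : ℕ) = bval σ ∧ σ b ≠ b ∧ (σ b : ℕ) < (b : ℕ) ∧
      τ (Fin.last d) = Equiv.swap (σ b) b ∧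
      (List.ofFn fun m : Fin d => τ m.castSucc).reverse.prod = Equiv.swap (σ b) b * σ := by
  obtain ⟨a, b, hab, htop⟩ := isSwap_lt (hs (Fin.last d))
  set ρ := (List.ofFn fun m : Fin d => τ m.castSucc).reverse.prod with hρ_def
  have hρfix : ∀ x : Fin n, (b : ℕ) ≤ (x : ℕ) → ρ x = x := by
    intro x hx
    apply prod_fix
    intro p hp
    rw [List.mem_reverse, List.mem_ofFn] at hp
    obtain ⟨m, rfl⟩ := hp
    obtain ⟨am, bm, habm, hpm⟩ := isSwap_lt (hs m.castSucc)
    have hlt : bval (τ m.castSucc) < bval (τ (Fin.last d)) :=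
      hm (Fin.castSucc_lt_last m)
    show (τ m.castSucc) x = x
    rw [hpm] at hlt ⊢
    rw [bval_swap habm, htop, bval_swap hab] at hlt
    exact swap_apply_of_gt habm (lt_of_lt_of_le hlt hx)
  have hsplit : σ = Equiv.swap a b * ρ := by
    rw [← hσ, List.ofFn_succ', List.concat_eq_append, List.reverse_append,
      List.reverse_singleton, List.singleton_append, List.prod_cons, htop]
  have hσb : σ b = a := by
    rw [hsplit, Equiv.Perm.mul_apply, hρfix b le_rfl, Equiv.swap_apply_right]
  have hσfix : ∀ x : Fin n, (b : ℕ) < (x : ℕ) → σ x = x := by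
    intro x hx
    rw [hsplit, Equiv.Perm.mul_apply, hρfix x (le_of_lt hx), swap_apply_of_gt hab hx]
  have hσbne : σ b ≠ b := by rw [hσb]; exact Fin.ne_of_lt hab
  have hbval : (b : ℕ) = bval σ := by
    apply le_antisymm
    · exact Finset.le_sup (f := fun x : Fin n => (x : ℕ)) (mem_support.2 hσbne)
    · apply Finset.sup_le
      intro x hx
      by_contra hgt
      push_neg at hgt
      exact (mem_support.1 hx) (hσfix x hgt)
  refine ⟨b, hbval, hσbne, by rw [hσb]; exact hab, ?_, ?_⟩
  · rw [htop, hσb]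
  · rw [hσb, hsplit, ← mul_assoc, Equiv.swap_mul_self, one_mul]

lemma colength_one' {n : ℕ} : colength (1 : Equiv.Perm (Fin n)) = 0 := by
  simp [colength]

lemma colength_eq_zero {n : ℕ} {σ : Equiv.Perm (Fin n)} : colength σ = 0 ↔ σ = 1 := by
  rw [colength_eq]
  constructor
  · intro h
    have h1 := two_mul_card_cycleType_le σ
    have : σ.support.card = 0 := by omega
    rw [Finset.card_eq_zero, Equiv.Perm.support_eq_empty_iff] at this
    exact this
  · rintro rfl; simp

set_option maxHeartbeats 2000000 in
lemma count_fact {n : ℕ} : ∀ (d : ℕ) (σ : Equiv.Perm (Fin n)),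
    Nat.card {τ : Fin d → Equiv.Perm (Fin n) //
      (∀ m, (τ m).IsSwap) ∧ StrictMono (fun m => bval (τ m)) ∧
      (List.ofFn τ).reverse.prod = σ} = if d = colength σ then 1 else 0 := by
  intro d
  induction d with
  | zero =>
    intro σ
    by_cases hσ : σ = 1
    · subst hσ
      rw [if_pos (by rw [colength_one'])]
      rw [Nat.card_eq_one_iff_unique]
      refine ⟨by infer_instance, ⟨⟨fun m => m.elim0, fun m => m.elim0, fun i _ _ => i.elim0, by simp⟩⟩⟩
    · rw [if_neg (fun h => hσ (colength_eq_zero.1 h.symm))]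
      rw [Nat.card_eq_zero]
      left
      refine ⟨?_⟩
      rintro ⟨τ, -, -, hp⟩
      exact hσ (by simpa using hp.symm)
  | succ d ih =>
    intro σ
    by_cases hσ : σ = 1
    · rw [if_neg (by rw [hσ, colength_one']; omega)]
      rw [Nat.card_eq_zero]; left
      refine ⟨?_⟩
      rintro ⟨τ, hs, hm, hp⟩
      obtain ⟨b, -, hbne, -, -, -⟩ := structure_lemma τ hs hm hp
      rw [hσ] at hbne; simp at hbne
    · have hne : σ.support.Nonempty := by
        rw [Finset.nonempty_iff_ne_empty, Ne, Equiv.Perm.support_eq_empty_iff]; exact hσ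
      obtain ⟨b, hbmem, hbmax⟩ := Finset.exists_max_image σ.support (fun x => (x : ℕ)) hne
      have hbval : bval σ = (b : ℕ) :=
        le_antisymm (Finset.sup_le hbmax) (Finset.le_sup (f := fun x : Fin n => (x : ℕ)) hbmem)
      have hσb : σ b ≠ b := mem_support.1 hbmem
      have habv : (σ b : ℕ) < (b : ℕ) :=
        lt_of_le_of_ne (hbmax _ (apply_mem_support.2 hbmem))
          (fun hh => hσb (Fin.ext hh))
      have hab : σ b < b := by rw [Fin.lt_def]; exact habv
      set ρ := Equiv.swap (σ b) b * σ with hρ_def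
      have hcol : colength ρ + 1 = colength σ := by
        rw [hρ_def, Equiv.swap_comm]; exact colength_swap_mul σ b hσb
      have hρfix : ∀ x : Fin n, (b : ℕ) ≤ (x : ℕ) → ρ x = x := by
        intro x hx
        rcases eq_or_ne x b with rfl | hxb
        · rw [hρ_def, Equiv.Perm.mul_apply, Equiv.swap_apply_left]
        · have hxs : σ x = x := by
            by_contra hxs
            have := hbmax x (mem_support.2 hxs)
            exact hxb (Fin.ext (le_antisymm this hx))
          rw [hρ_def, Equiv.Perm.mul_apply, hxs]
          apply Equiv.swap_apply_of_ne_of_ne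
          · intro hh; rw [hh] at hx; omega
          · exact hxb
      have key : ∀ (τ : Fin (d + 1) → Equiv.Perm (Fin n)), (∀ m, (τ m).IsSwap) →
          StrictMono (fun m => bval (τ m)) → (List.ofFn τ).reverse.prod = σ →
          τ (Fin.last d) = Equiv.swap (σ b) b ∧
          (List.ofFn fun m : Fin d => τ m.castSucc).reverse.prod = ρ := by
        intro τ hs hm hp
        obtain ⟨b', hb'val, hb'ne, hb'lt, htop, htail⟩ := structure_lemma τ hs hm hp
        have hbb : b' = b := Fin.ext (by rw [hb'val, hbval])
        subst hbb
        exact ⟨htop, htail⟩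
      set t := Equiv.swap (σ b) b with ht_def
      have hbvt : bval t = (b : ℕ) := bval_swap hab
      -- the bijection
      set T1 := {τ : Fin (d + 1) → Equiv.Perm (Fin n) //
        (∀ m, (τ m).IsSwap) ∧ StrictMono (fun m => bval (τ m)) ∧
        (List.ofFn τ).reverse.prod = σ} with hT1
      set T2 := {τ : Fin d → Equiv.Perm (Fin n) //
        (∀ m, (τ m).IsSwap) ∧ StrictMono (fun m => bval (τ m)) ∧
        (List.ofFn τ).reverse.prod = ρ} with hT2
      have hcard : Nat.card T1 = Nat.card T2 := by
        apply Nat.card_congr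
        refine Equiv.ofBijective (fun x => ⟨fun m => x.1 m.castSucc, fun m => x.2.1 _,
          fun i j hij => x.2.2.1 (Fin.castSucc_lt_castSucc_iff.2 hij),
          (key x.1 x.2.1 x.2.2.1 x.2.2.2).2⟩) ⟨?_, ?_⟩
        · rintro ⟨τ₁, hs₁, hm₁, hp₁⟩ ⟨τ₂, hs₂, hm₂, hp₂⟩ hF
          have heq : (fun m : Fin d => τ₁ m.castSucc) = fun m : Fin d => τ₂ m.castSucc :=
            congrArg Subtype.val hF
          apply Subtype.ext
          funext m
          show τ₁ m = τ₂ m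
          induction m using Fin.lastCases with
          | last => rw [(key τ₁ hs₁ hm₁ hp₁).1, (key τ₂ hs₂ hm₂ hp₂).1]
          | cast m => exact congrFun heq m
        · rintro ⟨τ', hs', hm', hp'⟩
          have hbnd : ∀ m : Fin d, bval (τ' m) < (b : ℕ) := by
            intro m
            have hd0 : d ≠ 0 := by rintro rfl; exact m.elim0
            obtain ⟨e, rfl⟩ := Nat.exists_eq_succ_of_ne_zero hd0
            obtain ⟨b'', hb''val, hb''ne, hb''lt, htop'', -⟩ := structure_lemma τ' hs' hm' hp'
            have hb''b : (b'' : ℕ) < (b : ℕ) := by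
              by_contra hh
              push_neg at hh
              exact hb''ne (hρfix b'' hh)
            have h1 : bval (τ' (Fin.last e)) = (b'' : ℕ) := by
              rw [htop'']; exact bval_swap (by rw [Fin.lt_def]; exact hb''lt)
            calc bval (τ' m) ≤ bval (τ' (Fin.last e)) := hm'.monotone (Fin.le_last m)
            _ < (b : ℕ) := by rw [h1]; exact hb''b
          refine ⟨⟨Fin.snoc τ' t, ?_, ?_, ?_⟩, ?_⟩
          · intro m
            induction m using Fin.lastCases with
            | last => rw [Fin.snoc_last]; exact ⟨σ b, b, hσb, rfl⟩
            | cast m => rw [Fin.snoc_castSucc]; exact hs' m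
          · intro i j hij
            induction j using Fin.lastCases with
            | last =>
              have hi : i ≠ Fin.last d := Fin.ne_last_of_lt hij
              obtain ⟨i', rfl⟩ := Fin.exists_castSucc_eq.2 hi
              simp only [Fin.snoc_castSucc, Fin.snoc_last, hbvt]
              exact hbnd i'
            | cast j' =>
              have hi : i ≠ Fin.last d := Fin.ne_last_of_lt (lt_trans hij (Fin.castSucc_lt_last j'))
              obtain ⟨i', rfl⟩ := Fin.exists_castSucc_eq.2 hi
              simp only [Fin.snoc_castSucc]
              exact hm' (Fin.castSucc_lt_castSucc_iff.1 hij)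
          · have hofn : List.ofFn (Fin.snoc τ' t : Fin (d + 1) → Equiv.Perm (Fin n)) =
                (List.ofFn τ').concat t := by
              rw [List.ofFn_succ']
              simp only [Fin.snoc_castSucc, Fin.snoc_last]
            rw [hofn, List.concat_eq_append, List.reverse_append, List.reverse_singleton,
              List.singleton_append, List.prod_cons, hp', hρ_def, ← mul_assoc, ht_def,
              Equiv.swap_mul_self, one_mul]
          · apply Subtype.ext
            funext m
            show (Fin.snoc τ' t : Fin (d + 1) → Equiv.Perm (Fin n)) m.castSucc = τ' m
            rw [Fin.snoc_castSucc]
      rw [hT1] at hcard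
      rw [hcard, hT2, ih ρ]
      split_ifs with h1 h2 h3
      · rfl
      · exact absurd (by rw [h1]; exact hcol) h2
      · exact absurd (Nat.succ_injective (hcol.trans h3.symm)).symm h1
      · rfl

lemma length_of_seq {n d : ℕ} (τ : Fin d → Equiv.Perm (Fin n))
    (hs : ∀ m, (τ m).IsSwap) (hm : StrictMono fun m => bval (τ m)) :
    colength ((List.ofFn τ).reverse.prod) = d := by
  by_contra hne
  have hcf := count_fact (n := n) d ((List.ofFn τ).reverse.prod)
  rw [if_neg (fun hh => hne hh.symm)] at hcf
  have hnonempty : Nonempty {τ' : Fin d → Equiv.Perm (Fin n) //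
      (∀ m, (τ' m).IsSwap) ∧ StrictMono (fun m => bval (τ' m)) ∧
      (List.ofFn τ').reverse.prod = (List.ofFn τ).reverse.prod} := ⟨⟨τ, hs, hm, rfl⟩⟩
  have hpos := Nat.card_pos (α := {τ' : Fin d → Equiv.Perm (Fin n) //
      (∀ m, (τ' m).IsSwap) ∧ StrictMono (fun m => bval (τ' m)) ∧
      (List.ofFn τ').reverse.prod = (List.ofFn τ).reverse.prod})
  exact absurd hcf hpos.ne'

/-- for every `n ≥ 1`, `h, g ∈ S_n` and `d ≥ 0`, the number of strictly
monotone sequences of transpositions `(τ_1,…,τ_d)` with `τ_d ⋯ τ_1 h = g` equals `1` if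
`d = ℓ*(g h⁻¹)` and `0` otherwise.  In particular, for fixed `h`, the number of strictly
monotone `d`-step paths from `h` into the class `cyc(ν)` equals the number of `σ ∈ S_n`
with `ℓ*(σ) = d` and `σ h ∈ cyc(ν)`. -/
theorem strictly_monotone_path_count (n : ℕ) (hn : 1 ≤ n) (h g : Equiv.Perm (Fin n))
    (d : ℕ) :
    (Nat.card {τ : Fin d → Equiv.Perm (Fin n) //
        (∀ m, (τ m).IsSwap) ∧
        StrictMono (fun m => bval (τ m)) ∧
        (List.ofFn τ).reverse.prod * h = g} =
      if d = colength (g * h⁻¹) then 1 else 0) ∧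
    ∀ ν : Nat.Partition n,
      Nat.card {τ : Fin d → Equiv.Perm (Fin n) //
          (∀ m, (τ m).IsSwap) ∧
          StrictMono (fun m => bval (τ m)) ∧
          fullCycleType ((List.ofFn τ).reverse.prod * h) = ν.parts} =
        Nat.card {σ : Equiv.Perm (Fin n) //
          colength σ = d ∧ fullCycleType (σ * h) = ν.parts} := by
  constructor
  · rw [← count_fact (n := n) d (g * h⁻¹)]
    apply Nat.card_congr
    apply Equiv.subtypeEquivRight
    intro τ
    constructor
    · rintro ⟨h1, h2, h3⟩
      exact ⟨h1, h2, eq_mul_inv_iff_mul_eq.2 h3⟩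
    · rintro ⟨h1, h2, h3⟩
      exact ⟨h1, h2, eq_mul_inv_iff_mul_eq.1 h3⟩
  · intro ν
    apply Nat.card_congr
    refine Equiv.ofBijective (fun x =>
      ⟨(List.ofFn x.1).reverse.prod, length_of_seq x.1 x.2.1 x.2.2.1, x.2.2.2⟩) ⟨?_, ?_⟩
    · rintro ⟨τ₁, hs₁, hm₁, ht₁⟩ ⟨τ₂, hs₂, hm₂, ht₂⟩ hF
      have hpeq : (List.ofFn τ₁).reverse.prod = (List.ofFn τ₂).reverse.prod :=
        congrArg Subtype.val hF
      set p := (List.ofFn τ₁).reverse.prod with hp_def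
      have hcol : colength p = d := length_of_seq τ₁ hs₁ hm₁
      have hone := count_fact (n := n) d p
      rw [if_pos hcol.symm] at hone
      have hsub := (Nat.card_eq_one_iff_unique.1 hone).1
      have heq := hsub.allEq
        (⟨τ₁, hs₁, hm₁, rfl⟩ : {τ : Fin d → Equiv.Perm (Fin n) //
          (∀ m, (τ m).IsSwap) ∧ StrictMono (fun m => bval (τ m)) ∧
          (List.ofFn τ).reverse.prod = p})
        ⟨τ₂, hs₂, hm₂, hpeq.symm⟩
      have hτeq : τ₁ = τ₂ := congrArg Subtype.val heq
      exact Subtype.ext hτeq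
    · rintro ⟨p, hpd, hpt⟩
      have hone := count_fact (n := n) d p
      rw [if_pos hpd.symm] at hone
      obtain ⟨⟨τ, hs, hm, hp⟩⟩ := (Nat.card_eq_one_iff_unique.1 hone).2
      exact ⟨⟨τ, hs, hm, by rw [hp]; exact hpt⟩, Subtype.ext hp⟩
end
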